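/- For every function f holomorphic on the open unit disc with |f(z)| ≤ 1 for all z in the disc, every compact subset L of the disc, and every ε > 0, there exists a finite Blaschke product B such that |B(z) − f(z)| < ε for all z ∈ L. -/

import Mathlib

open Complex Metric MeasureTheory Filter Set

noncomputable section

/-- A finite Blaschke product: a unimodular constant times a finite product of
disc automorphisms `z ↦ (z - wₖ)/(1 - conj wₖ · z)` with `wₖ` in the open unit disc. -/
def IsFiniteBlaschke (B : ℂ → ℂ) : Prop :=
  ∃ (n : ℕ) (ζ : ℂ) (w : Fin (n + 1) → ℂ),
    ‖ζ‖ = 1 ∧ (∀ k, ‖w k‖ < 1) ∧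
    ∀ z : ℂ, B z = ζ * ∏ k, (z - w k) / (1 - (starRingEnd ℂ) (w k) * z)

/-- Arclength measure on the unit circle, viewed as a measure on `ℂ`. -/
def arclength : Measure ℂ :=
  Measure.map (circleMap 0 1) (volume.restrict (Set.Ioc 0 (2 * Real.pi)))

open Polynomial in
lemma maxmod {q : ℂ → ℂ} (hq : Differentiable ℂ q) {s : ℝ}
    (hb : ∀ z ∈ Metric.sphere (0:ℂ) 1, ‖q z‖ ≤ s) :
    ∀ z ∈ Metric.closedBall (0:ℂ) 1, ‖q z‖ ≤ s := by
  intro z hz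
  apply Complex.norm_le_of_forall_mem_frontier_norm_le (U := Metric.ball (0:ℂ) 1)
    isBounded_ball hq.diffContOnCl
  · intro w hw
    rw [frontier_ball 0 one_ne_zero] at hw
    exact hb w hw
  · rwa [closure_ball 0 one_ne_zero]


open Polynomial in
lemma eval_bound (p : Polynomial ℂ) {u : ℂ} (hu : 1 ≤ ‖u‖) :
    ‖p.eval u‖ ≤ (∑ k ∈ Finset.range (p.natDegree+1), ‖p.coeff k‖) * ‖u‖ ^ p.natDegree := by
  rw [Polynomial.eval_eq_sum_range, Finset.sum_mul]
  refine (norm_sum_le _ _).trans (Finset.sum_le_sum ?_)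
  intro k hk
  rw [norm_mul, norm_pow]
  exact mul_le_mul_of_nonneg_left
    (pow_le_pow_right₀ hu (Nat.lt_succ_iff.mp (Finset.mem_range.mp hk))) (norm_nonneg _)

set_option maxHeartbeats 1000000 in
open Polynomial in
lemma roots_lt_one (p : Polynomial ℂ) {s : ℝ} (hs : s < 1)
    (hp : ∀ z ∈ Metric.closedBall (0:ℂ) 1, ‖p.eval z‖ ≤ s)
    {m : ℕ} (hm : p.natDegree < m) {w : ℂ} (hw : (X ^ m + p).eval w = 0) : ‖w‖ < 1 := by
  by_contra h
  push_neg at h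
  have hw0 : w ≠ 0 := by
    intro h0; rw [h0, norm_zero] at h; linarith
  set n := p.natDegree with hn
  set q : ℂ → ℂ := fun u => ∑ k ∈ Finset.range (n+1), p.coeff k * u ^ (n - k) with hqdef
  have hqdiff : Differentiable ℂ q := by
    apply Differentiable.fun_sum
    intro k _
    exact (differentiable_pow _).const_mul _
  have key : ∀ u : ℂ, u ≠ 0 → q u = u ^ n * p.eval u⁻¹ := by
    intro u hu
    rw [Polynomial.eval_eq_sum_range, Finset.mul_sum, hqdef]
    apply Finset.sum_congr rfl
    intro k hk
    rw [Finset.mem_range] at hk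
    have hk' : k ≤ n := Nat.lt_succ_iff.mp hk
    have hpow : u ^ n * (u ^ k)⁻¹ = u ^ (n - k) := by
      field_simp
      rw [← pow_add]
      congr 1
      omega
    rw [inv_pow, ← hpow]
    ring
  have hqb : ∀ u ∈ Metric.closedBall (0:ℂ) 1, ‖q u‖ ≤ s := by
    apply maxmod hqdiff
    intro u hu
    have hu1 : ‖u‖ = 1 := by simpa using hu
    have hu0 : u ≠ 0 := by intro h0; rw [h0, norm_zero] at hu1; norm_num at hu1
    rw [key u hu0, norm_mul, norm_pow, hu1, one_pow, one_mul]
    apply hp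
    simp [norm_inv, hu1]
  have hwin : w⁻¹ ∈ Metric.closedBall (0:ℂ) 1 := by
    simp only [Metric.mem_closedBall, dist_zero_right, norm_inv]
    exact inv_le_one_of_one_le₀ h
  have hpe : p.eval w = w ^ n * q w⁻¹ := by
    rw [key w⁻¹ (inv_ne_zero hw0), inv_inv, inv_pow, ← mul_assoc,
      mul_inv_cancel₀ (pow_ne_zero n hw0), one_mul]
  have h1 : ‖p.eval w‖ ≤ ‖w‖ ^ n * s := by
    rw [hpe, norm_mul, norm_pow]
    exact mul_le_mul_of_nonneg_left (hqb _ hwin) (by positivity)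
  have h2 : ‖w‖ ^ n ≤ ‖w‖ ^ m := pow_le_pow_right₀ h hm.le
  have h3 : (1:ℝ) ≤ ‖w‖ ^ m := one_le_pow₀ h
  have hs0 : 0 ≤ s := le_trans (norm_nonneg _) (hp 0 (by simp))
  have heq : p.eval w = -w ^ m := by
    rw [Polynomial.eval_add, Polynomial.eval_pow, Polynomial.eval_X] at hw
    linear_combination hw
  have h4 : ‖w‖ ^ m ≤ ‖w‖ ^ n * s := by
    rw [← norm_pow, ← norm_neg, ← heq]; exact h1
  nlinarith

set_option maxHeartbeats 1000000 in
open Polynomial in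
lemma poly_blaschke (p : Polynomial ℂ) {s ρ ε : ℝ} (hs : s < 1)
    (hp : ∀ z ∈ Metric.closedBall (0:ℂ) 1, ‖p.eval z‖ ≤ s)
    (hρ0 : 0 ≤ ρ) (hρ : ρ < 1) (hε : 0 < ε) :
    ∃ B : ℂ → ℂ, IsFiniteBlaschke B ∧
      ∀ z ∈ Metric.closedBall (0:ℂ) ρ, ‖B z - p.eval z‖ < ε := by
  have hs0 : 0 ≤ s := le_trans (norm_nonneg _) (hp 0 (by simp))
  set n := p.natDegree with hn
  set C₀ : ℝ := ∑ k ∈ Finset.range (n+1), ‖p.coeff k‖ with hC₀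
  have hC0 : 0 ≤ C₀ := Finset.sum_nonneg fun _ _ => norm_nonneg _
  -- choose j
  obtain ⟨j, hj1, hj⟩ : ∃ j : ℕ, 1 ≤ j ∧ (1 + C₀) * ρ ^ j < min (1/2) (ε/4) := by
    have h1 : Tendsto (fun j : ℕ => (1 + C₀) * ρ ^ j) atTop (nhds ((1+C₀) * 0)) :=
      (tendsto_pow_atTop_nhds_zero_of_lt_one hρ0 hρ).const_mul _
    rw [mul_zero] at h1
    have h2 := h1.eventually_lt_const (by positivity : (0:ℝ) < min (1/2) (ε/4))
    obtain ⟨j, hj⟩ := (h2.and (eventually_ge_atTop 1)).exists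
    exact ⟨j, hj.2, hj.1⟩
  set m := n + j with hm
  have hnm : p.natDegree < m := by omega
  set A : Polynomial ℂ := X ^ m + p with hA
  have hmonic : A.Monic := by
    apply Polynomial.monic_X_pow_add
    exact lt_of_le_of_lt (Polynomial.degree_le_natDegree) (by exact_mod_cast hnm)
  have hA0 : A ≠ 0 := hmonic.ne_zero
  have hAdeg : A.natDegree = m := by
    apply Polynomial.natDegree_eq_of_degree_eq_some
    rw [hA, Polynomial.degree_add_eq_left_of_degree_lt, Polynomial.degree_X_pow]
    rw [Polynomial.degree_X_pow]
    exact lt_of_le_of_lt (Polynomial.degree_le_natDegree) (by exact_mod_cast hnm)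
  have hsplits : A.Splits := IsAlgClosed.splits A
  have hcard : A.roots.card = m := by
    rw [Polynomial.splits_iff_card_roots.mp hsplits, hAdeg]
  set l := A.roots.toList with hl
  have hlen : l.length = m := by rw [hl, A.roots.length_toList, hcard]
  set w : Fin m → ℂ := fun k => l.get (Fin.cast hlen.symm k) with hwdef
  have hroot : ∀ k, A.eval (w k) = 0 := by
    intro k
    have : w k ∈ A.roots := by
      rw [← Multiset.mem_toList]
      exact List.get_mem l (Fin.cast hlen.symm k)
    exact (Polynomial.mem_roots'.mp this).2
  have hwlt : ∀ k, ‖w k‖ < 1 := fun k => roots_lt_one p hs hp hnm (hroot k)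
  have evalA : ∀ z : ℂ, A.eval z = ∏ k, (z - w k) := by
    intro z
    conv_lhs => rw [hsplits.eq_prod_roots_of_monic hmonic]
    rw [Polynomial.eval_multiset_prod, Multiset.map_map]
    have : A.roots = (l : Multiset ℂ) := (A.roots.coe_toList).symm
    rw [this, Multiset.map_coe, Multiset.prod_coe]
    have : l = List.ofFn l.get := (List.ofFn_get l).symm
    conv_lhs => rw [this, List.map_ofFn, List.prod_ofFn]
    exact Fintype.prod_equiv (finCongr hlen) _ _ (fun i => by simp [hwdef, finCongr])
  set D : ℂ → ℂ := fun z => ∏ k, (1 - (starRingEnd ℂ) (w k) * z) with hDdef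
  have hD1 : ∀ z : ℂ, z ≠ 0 →
      D z = 1 + z ^ m * (starRingEnd ℂ) (p.eval ((starRingEnd ℂ) z)⁻¹) := by
    intro z hz
    set u : ℂ := ((starRingEnd ℂ) z)⁻¹ with hu
    have hcu : (starRingEnd ℂ) u = z⁻¹ := by rw [hu, map_inv₀, Complex.conj_conj]
    have step1 : D z = z ^ m * (starRingEnd ℂ) (A.eval u) := by
      rw [evalA u, map_prod, hDdef]
      rw [← Fin.prod_const m z, ← Finset.prod_mul_distrib]
      apply Finset.prod_congr rfl
      intro k _
      rw [map_sub, hcu, mul_sub, mul_inv_cancel₀ hz]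
      ring
    have step2 : (starRingEnd ℂ) (A.eval u) = (z⁻¹) ^ m + (starRingEnd ℂ) (p.eval u) := by
      rw [hA]
      simp only [Polynomial.eval_add, Polynomial.eval_pow, Polynomial.eval_X, map_add, map_pow, hcu]
    rw [step1, step2, mul_add, ← mul_pow, mul_inv_cancel₀ hz, one_pow]
  have hDb : ∀ z ∈ Metric.closedBall (0:ℂ) ρ, ‖D z - 1‖ ≤ C₀ * ρ ^ j := by
    intro z hz
    rcases eq_or_ne z 0 with rfl | hz0
    · simp [hDdef]
      positivity
    · have hzρ : ‖z‖ ≤ ρ := by simpa using hz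
      have hzpos : 0 < ‖z‖ := norm_pos_iff.mpr hz0
      rw [hD1 z hz0, add_sub_cancel_left, norm_mul, norm_pow]
      have hucz : ‖((starRingEnd ℂ) z)⁻¹‖ = ‖z‖⁻¹ := by
        rw [norm_inv, RCLike.norm_conj]
      have hu1 : 1 ≤ ‖((starRingEnd ℂ) z)⁻¹‖ := by
        rw [hucz]
        exact (one_le_inv₀ hzpos).mpr (le_trans hzρ hρ.le)
      have hb := eval_bound p hu1
      rw [RCLike.norm_conj]
      calc ‖z‖ ^ m * ‖p.eval ((starRingEnd ℂ) z)⁻¹‖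
          ≤ ‖z‖ ^ m * (C₀ * ‖((starRingEnd ℂ) z)⁻¹‖ ^ n) := by
            exact mul_le_mul_of_nonneg_left hb (by positivity)
        _ = C₀ * ‖z‖ ^ j := by
            have h1 : ‖z‖ ^ n * (‖z‖⁻¹) ^ n = 1 := by
              rw [← mul_pow, mul_inv_cancel₀ (ne_of_gt hzpos), one_pow]
            rw [hucz, hm, pow_add]
            calc ‖z‖ ^ n * ‖z‖ ^ j * (C₀ * ‖z‖⁻¹ ^ n)
                = ‖z‖ ^ n * ‖z‖⁻¹ ^ n * (C₀ * ‖z‖ ^ j) := by ring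
              _ = C₀ * ‖z‖ ^ j := by rw [h1, one_mul]
        _ ≤ C₀ * ρ ^ j := by
            exact mul_le_mul_of_nonneg_left (pow_le_pow_left₀ (norm_nonneg _) hzρ j) hC0
  have hρj : (0:ℝ) ≤ ρ ^ j := by positivity
  have hmin1 : (1 + C₀) * ρ ^ j < 1/2 := lt_of_lt_of_le hj (min_le_left _ _)
  have hmin2 : (1 + C₀) * ρ ^ j < ε/4 := lt_of_lt_of_le hj (min_le_right _ _)
  have hCj : C₀ * ρ ^ j ≤ (1 + C₀) * ρ ^ j := by nlinarith
  set B : ℂ → ℂ := fun z => 1 * ∏ k, (z - w k) / (1 - (starRingEnd ℂ) (w k) * z) with hBdef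
  have hmm1 : m - 1 + 1 = m := by omega
  refine ⟨B, ⟨m - 1, 1, fun k => w (Fin.cast hmm1 k), by simp, fun k => hwlt _, fun z => ?_⟩, ?_⟩
  · show (1 * ∏ k, (z - w k) / (1 - (starRingEnd ℂ) (w k) * z)) = _
    congr 1
    exact (Fintype.prod_equiv (finCongr hmm1)
      (fun k : Fin (m-1+1) => (z - w (Fin.cast hmm1 k)) / (1 - (starRingEnd ℂ) (w (Fin.cast hmm1 k)) * z))
      (fun k : Fin m => (z - w k) / (1 - (starRingEnd ℂ) (w k) * z)) (fun i => rfl)).symm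
  · intro z hz
    have hzρ : ‖z‖ ≤ ρ := by simpa using hz
    have hDz := hDb z hz
    have hDl : 1/2 ≤ ‖D z‖ := by
      have h1 : ‖(1:ℂ)‖ ≤ ‖D z‖ + ‖D z - 1‖ := by
        calc ‖(1:ℂ)‖ = ‖D z - (D z - 1)‖ := by ring_nf
          _ ≤ ‖D z‖ + ‖D z - 1‖ := norm_sub_le _ _
      rw [norm_one] at h1
      linarith
    have hDne : D z ≠ 0 := by
      intro h0; rw [h0, norm_zero] at hDl; linarith
    have hBz : B z = A.eval z / D z := by
      have e1 : B z = (∏ k, (z - w k)) / ∏ k, (1 - (starRingEnd ℂ) (w k) * z) := by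
        rw [show B z = 1 * ∏ k, (z - w k) / (1 - (starRingEnd ℂ) (w k) * z) from rfl,
          one_mul, Finset.prod_div_distrib]
      rw [e1, ← evalA]
    have hps : ‖p.eval z‖ ≤ s := hp z (Metric.closedBall_subset_closedBall hρ.le hz)
    have key : (B z - p.eval z) * D z = z ^ m + p.eval z * (1 - D z) := by
      rw [hBz, sub_mul, div_mul_cancel₀ _ hDne, hA]
      simp only [Polynomial.eval_add, Polynomial.eval_pow, Polynomial.eval_X]
      ring
    have h1 : ‖z‖ ^ m ≤ ρ ^ j := by
      calc ‖z‖ ^ m ≤ ρ ^ m := pow_le_pow_left₀ (norm_nonneg z) hzρ m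
        _ = ρ ^ n * ρ ^ j := by rw [hm, pow_add]
        _ ≤ 1 * ρ ^ j := mul_le_mul_of_nonneg_right (pow_le_one₀ hρ0 hρ.le) hρj
        _ = ρ ^ j := one_mul _
    have h2 : ‖p.eval z‖ * ‖1 - D z‖ ≤ C₀ * ρ ^ j := by
      rw [norm_sub_rev]
      calc ‖p.eval z‖ * ‖D z - 1‖ ≤ 1 * (C₀ * ρ ^ j) :=
            mul_le_mul (hps.trans hs.le) hDz (norm_nonneg _) zero_le_one
        _ = C₀ * ρ ^ j := one_mul _
    have hnum : ‖z ^ m + p.eval z * (1 - D z)‖ ≤ (1 + C₀) * ρ ^ j := by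
      refine (norm_add_le _ _).trans ?_
      rw [norm_pow, norm_mul]
      nlinarith
    have h3 : ‖B z - p.eval z‖ * ‖D z‖ ≤ (1 + C₀) * ρ ^ j := by
      rw [← norm_mul, key]; exact hnum
    nlinarith [norm_nonneg (B z - p.eval z), hDl]

set_option maxHeartbeats 1000000 in
/-- Caratheodory's theorem: finite Blaschke products are dense in the closed unit ball of
`H^∞` for the topology of locally uniform convergence. -/
theorem caratheodory_approx (f : ℂ → ℂ)
    (hf : DifferentiableOn ℂ f (Metric.ball (0:ℂ) 1))
    (hfb : ∀ z ∈ Metric.ball (0:ℂ) 1, ‖f z‖ ≤ 1)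
    (L : Set ℂ) (hL : IsCompact L) (hLD : L ⊆ Metric.ball (0:ℂ) 1)
    (ε : ℝ) (hε : 0 < ε) :
    ∃ B : ℂ → ℂ, IsFiniteBlaschke B ∧ ∀ z ∈ L, ‖B z - f z‖ < ε := by
  rcases L.eq_empty_or_nonempty with rfl | hLne
  · exact ⟨fun z => 1 * ∏ k : Fin 1, (z - 0) / (1 - (starRingEnd ℂ) 0 * z),
      ⟨0, 1, fun _ => 0, by simp, fun _ => by simp, fun z => rfl⟩, by simp⟩
  obtain ⟨z₀, hz₀L, hz₀'⟩ := hL.exists_isMaxOn hLne continuous_norm.continuousOn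
  have hz₀ : ∀ z ∈ L, ‖z‖ ≤ ‖z₀‖ := fun z hz => hz₀' hz
  set ρ := ‖z₀‖ with hρdef
  have hρ0 : 0 ≤ ρ := norm_nonneg _
  have hρ1 : ρ < 1 := by simpa using hLD hz₀L
  have hLsub : L ⊆ Metric.closedBall 0 ρ := fun z hz => by
    simpa using hz₀ z hz
  set ρ' := (ρ + 1) / 2 with hρ'def
  have hρ'1 : ρ' < 1 := by rw [hρ'def]; linarith
  have hρρ' : ρ ≤ ρ' := by rw [hρ'def]; linarith
  have hρ'0 : 0 ≤ ρ' := le_trans hρ0 hρρ'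
  set K := Metric.closedBall (0:ℂ) ρ' with hKdef
  have hKb : K ⊆ Metric.ball (0:ℂ) 1 := Metric.closedBall_subset_ball hρ'1
  have hKc : IsCompact K := isCompact_closedBall _ _
  have hfc : ContinuousOn f K := hf.continuousOn.mono hKb
  have huc := hKc.uniformContinuousOn_of_continuous hfc
  rw [Metric.uniformContinuousOn_iff] at huc
  obtain ⟨η, hη0, hη⟩ := huc (ε/6) (by linarith)
  set r := max (1 - η/2) (1/2) with hrdef
  have hr1 : r < 1 := by apply max_lt <;> linarith
  have hr0 : (0:ℝ) < r := lt_of_lt_of_le (by norm_num) (le_max_right _ _)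
  have hrη : 1 - r ≤ η/2 := by
    have h := le_max_left (1 - η/2) (1/2)
    rw [hrdef]; linarith
  set δ := min (ε/6) (1/2) with hδdef
  have hδ0 : 0 < δ := lt_min (by linarith) one_half_pos
  have hδε : δ ≤ ε/6 := min_le_left _ _
  have hδ1 : δ ≤ 1/2 := min_le_right _ _
  set g : ℂ → ℂ := fun z => ((1 - δ : ℝ) : ℂ) * f ((r : ℂ) * z) with hgdef
  have hgf : ∀ z ∈ L, ‖g z - f z‖ < ε/3 := by
    intro z hz
    have hzρ : ‖z‖ ≤ ρ := by simpa using hLsub hz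
    have hzK : z ∈ K := by
      simp only [hKdef, Metric.mem_closedBall, dist_zero_right]; linarith
    have hrzK : (r : ℂ) * z ∈ K := by
      simp only [hKdef, Metric.mem_closedBall, dist_zero_right, norm_mul,
        Complex.norm_real, Real.norm_eq_abs, _root_.abs_of_pos hr0]
      nlinarith
    have hdist : dist ((r : ℂ) * z) z < η := by
      rw [dist_eq_norm]
      have e : (r : ℂ) * z - z = -(((1 - r : ℝ) : ℂ) * z) := by
        push_cast; ring
      rw [e, norm_neg, norm_mul, Complex.norm_real, Real.norm_eq_abs,
        _root_.abs_of_nonneg (by linarith : (0:ℝ) ≤ 1 - r)]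
      nlinarith [norm_nonneg z]
    have h1 := hη _ hrzK _ hzK hdist
    rw [dist_eq_norm] at h1
    have hfz : ‖f z‖ ≤ 1 := hfb z (hLD hz)
    have e2 : g z - f z = ((1 - δ : ℝ) : ℂ) * (f ((r:ℂ)*z) - f z) - ((δ:ℝ):ℂ) * f z := by
      rw [hgdef]; push_cast; ring
    rw [e2]
    calc ‖((1 - δ : ℝ) : ℂ) * (f ((r:ℂ)*z) - f z) - ((δ:ℝ):ℂ) * f z‖
        ≤ ‖((1 - δ : ℝ) : ℂ) * (f ((r:ℂ)*z) - f z)‖ + ‖((δ:ℝ):ℂ) * f z‖ := norm_sub_le _ _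
      _ = (1 - δ) * ‖f ((r:ℂ)*z) - f z‖ + δ * ‖f z‖ := by
          rw [norm_mul, norm_mul, Complex.norm_real, Complex.norm_real,
            Real.norm_eq_abs, Real.norm_eq_abs, _root_.abs_of_nonneg (by linarith : (0:ℝ) ≤ 1 - δ),
            _root_.abs_of_nonneg hδ0.le]
      _ < ε/3 := by nlinarith [norm_nonneg (f ((r:ℂ)*z) - f z)]
  have hgb : ∀ z ∈ Metric.closedBall (0:ℂ) 1, ‖g z‖ ≤ 1 - δ := by
    intro z hz
    have hz1 : ‖z‖ ≤ 1 := by simpa using hz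
    have : (r:ℂ) * z ∈ Metric.ball (0:ℂ) 1 := by
      simp only [Metric.mem_ball, dist_zero_right, norm_mul, Complex.norm_real,
        Real.norm_eq_abs, _root_.abs_of_pos hr0]
      nlinarith
    have h2 := hfb _ this
    rw [hgdef]
    simp only [norm_mul, Complex.norm_real, Real.norm_eq_abs,
      _root_.abs_of_nonneg (by linarith : (0:ℝ) ≤ 1 - δ)]
    nlinarith
  set R : NNReal := ⟨(1 + 1/r)/2, by positivity⟩ with hRdef
  have h1r : (1:ℝ) < 1/r := (one_lt_one_div hr0 hr1)
  have hgd : DifferentiableOn ℂ g (Metric.closedBall (0:ℂ) R) := by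
    apply DifferentiableOn.const_mul
    apply DifferentiableOn.comp hf ((differentiable_id.const_mul ((r:ℂ))).differentiableOn)
    intro z hz
    have hz' : ‖z‖ ≤ (1 + 1/r)/2 := by
      have h := Metric.mem_closedBall.mp hz; rw [dist_zero_right] at h; exact h
    simp only [Metric.mem_ball, dist_zero_right, norm_mul, Complex.norm_real,
      Real.norm_eq_abs, _root_.abs_of_pos hr0]
    have he : r * ((1 + 1/r)/2) = (r + 1)/2 := by field_simp
    calc r * ‖z‖ ≤ r * ((1 + 1/r)/2) := by nlinarith
      _ = (r + 1)/2 := he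
      _ < 1 := by linarith
  have hgps := hgd.hasFPowerSeriesOnBall (by
    rw [← NNReal.coe_pos]
    show (0:ℝ) < (1 + 1/r)/2
    positivity : 0 < R)
  set r'' : NNReal := ⟨(3 + 1/r)/4, by positivity⟩ with hr''def
  have hr''R : (r'' : ENNReal) < (R : ENNReal) := by
    rw [ENNReal.coe_lt_coe, ← NNReal.coe_lt_coe]
    show (3 + 1/r)/4 < (1 + 1/r)/2
    linarith
  have hconv := hgps.tendstoUniformlyOn hr''R
  rw [Metric.tendstoUniformlyOn_iff] at hconv
  set δ₂ := min (δ/2) (ε/6) with hδ₂def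
  have hδ₂0 : 0 < δ₂ := lt_min (by linarith) (by linarith)
  obtain ⟨N, hN⟩ := (hconv δ₂ hδ₂0).exists
  set c : ℕ → ℂ := fun i => (cauchyPowerSeries g 0 R).coeff i with hcdef
  set P : Polynomial ℂ := ∑ i ∈ Finset.range N, Polynomial.C (c i) * Polynomial.X ^ i with hPdef
  have hPeval : ∀ y : ℂ, P.eval y = (cauchyPowerSeries g 0 R).partialSum N y := by
    intro y
    rw [hPdef, FormalMultilinearSeries.partialSum, Polynomial.eval_finset_sum]
    apply Finset.sum_congr rfl
    intro i _
    rw [Polynomial.eval_mul, Polynomial.eval_C, Polynomial.eval_pow, Polynomial.eval_X,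
      FormalMultilinearSeries.apply_eq_pow_smul_coeff, smul_eq_mul]
    simp only [hcdef]
    ring
  have hP : ∀ y ∈ Metric.closedBall (0:ℂ) 1, ‖g y - P.eval y‖ < δ₂ := by
    intro y hy
    have hy1 : ‖y‖ ≤ 1 := by simpa using hy
    have hyb : y ∈ Metric.ball (0:ℂ) r'' := by
      simp only [Metric.mem_ball, dist_zero_right]
      show ‖y‖ < (3 + 1/r)/4
      linarith
    have := hN y hyb
    rw [dist_eq_norm, zero_add, ← hPeval] at this
    exact this
  have hPb : ∀ y ∈ Metric.closedBall (0:ℂ) 1, ‖P.eval y‖ ≤ 1 - δ/2 := by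
    intro y hy
    have h1 := hP y hy
    have h2 := hgb y hy
    have h3 : ‖P.eval y‖ ≤ ‖g y‖ + ‖g y - P.eval y‖ := by
      calc ‖P.eval y‖ = ‖g y - (g y - P.eval y)‖ := by ring_nf
        _ ≤ ‖g y‖ + ‖g y - P.eval y‖ := norm_sub_le _ _
    have h4 : δ₂ ≤ δ/2 := min_le_left _ _
    linarith
  obtain ⟨B, hB, hBp⟩ := poly_blaschke P (by linarith : 1 - δ/2 < 1) hPb hρ0 hρ1
    (by linarith : (0:ℝ) < ε/3)
  refine ⟨B, hB, ?_⟩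
  intro z hz
  have h1 := hBp z (hLsub hz)
  have h2 := hP z (Metric.closedBall_subset_closedBall hρ1.le (hLsub hz))
  have h3 := hgf z hz
  have h4 : δ₂ ≤ ε/6 := min_le_right _ _
  calc ‖B z - f z‖ = ‖(B z - P.eval z) + (-(g z - P.eval z)) + (g z - f z)‖ := by ring_nf
    _ ≤ ‖(B z - P.eval z) + (-(g z - P.eval z))‖ + ‖g z - f z‖ := norm_add_le _ _
    _ ≤ ‖B z - P.eval z‖ + ‖-(g z - P.eval z)‖ + ‖g z - f z‖ := by
        linarith [norm_add_le (B z - P.eval z) (-(g z - P.eval z))]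
    _ < ε := by rw [norm_neg]; linarith
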